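/- Let g : ℝ → ℝ be continuous and 2π-periodic, and let a₀ = (1/π)·∫₀^{2π} g(τ) dτ, aₖ = (1/π)·∫₀^{2π} g(τ)·sin(kτ) dτ and bₖ = (1/π)·∫₀^{2π} g(τ)·cos(kτ) dτ for k ≥ 1. Then for every r ∈ [0,1) and every θ ∈ ℝ, the Poisson integral equals the Fourier series: (1/2π)·∫_{−π}^{π} g(τ)·(1 − r²)/(1 − 2r·cos(θ−τ) + r²) dτ = a₀/2 + ∑_{k=1}^{∞} r^k·(aₖ·sin(kθ) + bₖ·cos(kθ)), the series on the right converging absolutely. -/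

import Mathlib

open Real

lemma kernel_hasSum {r : ℝ} (h0 : 0 ≤ r) (h1 : r < 1) (φ : ℝ) :
    HasSum (fun k : ℕ => if k = 0 then (1 : ℝ) else 2 * r ^ k * Real.cos (k * φ))
      ((1 - r ^ 2) / (1 - 2 * r * Real.cos φ + r ^ 2)) := by
  set z : ℂ := (r : ℂ) * Complex.exp ((φ : ℂ) * Complex.I) with hzdef
  have hznorm : ‖z‖ < 1 := by
    rw [hzdef, norm_mul, Complex.norm_real, Complex.norm_exp_ofReal_mul_I]
    simpa [abs_of_nonneg h0] using h1
  have hgeo : HasSum (fun k : ℕ => z ^ k) (1 - z)⁻¹ :=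
    hasSum_geometric_of_norm_lt_one hznorm
  have hre : ∀ k : ℕ, (z ^ k).re = r ^ k * Real.cos (k * φ) := by
    intro k
    have hzk : z ^ k = ((r ^ k : ℝ) : ℂ) * Complex.exp (((k * φ : ℝ) : ℂ) * Complex.I) := by
      rw [hzdef, mul_pow, ← Complex.exp_nat_mul]
      push_cast
      ring_nf
    rw [hzk, Complex.re_ofReal_mul, Complex.exp_ofReal_mul_I_re]
  have hres : HasSum (fun k : ℕ => r ^ k * Real.cos (k * φ)) ((1 - z)⁻¹).re := by
    have := Complex.hasSum_re hgeo
    simpa [hre] using this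
  have hzre : z.re = r * Real.cos φ := by
    rw [hzdef, Complex.re_ofReal_mul, Complex.exp_ofReal_mul_I_re]
  have hzim : z.im = r * Real.sin φ := by
    rw [hzdef, Complex.im_ofReal_mul, Complex.exp_ofReal_mul_I_im]
  set den : ℝ := 1 - 2 * r * Real.cos φ + r ^ 2 with hden
  have hnormSq : Complex.normSq (1 - z) = den := by
    rw [Complex.normSq_apply]
    simp only [Complex.sub_re, Complex.sub_im, Complex.one_re, Complex.one_im, hzre, hzim]
    have := Real.sin_sq_add_cos_sq φ
    nlinarith [this]
  have hdpos : 0 < den := by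
    nlinarith [Real.cos_le_one φ, Real.neg_one_le_cos φ, sq_nonneg (1 - r)]
  have hinvre : ((1 - z)⁻¹).re = (1 - r * Real.cos φ) / den := by
    rw [Complex.inv_re, hnormSq, Complex.sub_re, Complex.one_re, hzre]
  have h2 : HasSum (fun k : ℕ => 2 * (r ^ k * Real.cos (k * φ)))
      (2 * ((1 - r * Real.cos φ) / den)) := by
    rw [← hinvre]; exact hres.mul_left 2
  have hind : HasSum (fun k : ℕ => if k = 0 then (1 : ℝ) else 0) 1 := by
    simpa using hasSum_ite_eq (0 : ℕ) (1 : ℝ)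
  have hsub := h2.sub hind
  have hval : 2 * ((1 - r * Real.cos φ) / den) - 1 = (1 - r ^ 2) / den := by
    field_simp
    ring
  rw [hval] at hsub
  convert hsub using 2 with k
  · rfl
  rcases Nat.eq_zero_or_pos k with hk | hk
  · simp [hk]; norm_num
  · have : k ≠ 0 := hk.ne'
    simp [this]
    ring

theorem stmt_19 (g : ℝ → ℝ) (hg : Continuous g)
    (hper : ∀ τ, g (τ + 2 * Real.pi) = g τ)
    (a₀ : ℝ) (ha₀ : a₀ = (1 / Real.pi) * ∫ τ in (0 : ℝ)..(2 * Real.pi), g τ)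
    (a b : ℕ → ℝ)
    (ha : ∀ k : ℕ, a k = (1 / Real.pi) * ∫ τ in (0 : ℝ)..(2 * Real.pi),
      g τ * Real.sin ((k : ℝ) * τ))
    (hb : ∀ k : ℕ, b k = (1 / Real.pi) * ∫ τ in (0 : ℝ)..(2 * Real.pi),
      g τ * Real.cos ((k : ℝ) * τ))
    (r : ℝ) (hr : r ∈ Set.Ico (0 : ℝ) 1) (θ : ℝ) :
    Summable (fun k : ℕ =>
      |r ^ (k + 1) * (a (k + 1) * Real.sin (((k + 1 : ℕ) : ℝ) * θ)
        + b (k + 1) * Real.cos (((k + 1 : ℕ) : ℝ) * θ))|) ∧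
    (1 / (2 * Real.pi)) * ∫ τ in (-Real.pi)..Real.pi,
        g τ * (1 - r ^ 2) / (1 - 2 * r * Real.cos (θ - τ) + r ^ 2)
      = a₀ / 2 + ∑' k : ℕ, r ^ (k + 1) *
          (a (k + 1) * Real.sin (((k + 1 : ℕ) : ℝ) * θ)
            + b (k + 1) * Real.cos (((k + 1 : ℕ) : ℝ) * θ)) := by
  obtain ⟨h0r, h1r⟩ := hr
  have hπ : (0 : ℝ) < π := Real.pi_pos
  have hπ' : (π : ℝ) ≠ 0 := hπ.ne'
  -- a uniform bound for g on a big interval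
  obtain ⟨M, hM⟩ := (isCompact_Icc (a := -(2 * π)) (b := 2 * π)).exists_bound_of_continuousOn
    hg.continuousOn
  set M₀ : ℝ := max M 0 with hM₀def
  have hM₀ : 0 ≤ M₀ := le_max_right _ _
  have hMb : ∀ τ ∈ Set.Icc (-(2 * π)) (2 * π), |g τ| ≤ M₀ := by
    intro τ hτ
    exact le_trans (by simpa using hM τ hτ) (le_max_left _ _)
  -- coefficient bounds
  have hcoef : ∀ f : ℝ → ℝ, (∀ τ, |f τ| ≤ 1) →
      |∫ τ in (0 : ℝ)..(2 * π), g τ * f τ| ≤ M₀ * (2 * π) := by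
    intro f hf
    have h := intervalIntegral.norm_integral_le_of_norm_le_const
      (a := (0 : ℝ)) (b := 2 * π) (C := M₀) (f := fun τ => g τ * f τ) ?_
    · calc |∫ τ in (0 : ℝ)..(2 * π), g τ * f τ| ≤ M₀ * |2 * π - 0| := h
        _ = M₀ * (2 * π) := by rw [sub_zero, abs_of_pos (by positivity)]
    · intro x hx
      rw [Set.uIoc_of_le (by positivity)] at hx
      have hb1 : |g x| ≤ M₀ := hMb x ⟨by linarith [hx.1], hx.2⟩
      calc ‖g x * f x‖ = |g x| * |f x| := abs_mul _ _
        _ ≤ M₀ * 1 := mul_le_mul hb1 (hf x) (abs_nonneg _) hM₀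
        _ = M₀ := mul_one _
  have hacoef : ∀ k : ℕ, |a k| ≤ 2 * M₀ := by
    intro k
    rw [ha k, abs_mul, abs_of_pos (by positivity : (0:ℝ) < 1/π)]
    have := hcoef (fun τ => Real.sin ((k : ℝ) * τ)) (fun τ => Real.abs_sin_le_one _)
    calc 1 / π * |∫ τ in (0:ℝ)..(2*π), g τ * Real.sin ((k:ℝ) * τ)|
        ≤ 1 / π * (M₀ * (2 * π)) := by
          exact mul_le_mul_of_nonneg_left this (by positivity)
      _ = 2 * M₀ := by field_simp
  have hbcoef : ∀ k : ℕ, |b k| ≤ 2 * M₀ := by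
    intro k
    rw [hb k, abs_mul, abs_of_pos (by positivity : (0:ℝ) < 1/π)]
    have := hcoef (fun τ => Real.cos ((k : ℝ) * τ)) (fun τ => Real.abs_cos_le_one _)
    calc 1 / π * |∫ τ in (0:ℝ)..(2*π), g τ * Real.cos ((k:ℝ) * τ)|
        ≤ 1 / π * (M₀ * (2 * π)) := by
          exact mul_le_mul_of_nonneg_left this (by positivity)
      _ = 2 * M₀ := by field_simp
  -- the series terms
  set term : ℕ → ℝ := fun k => r ^ (k + 1) *
      (a (k + 1) * Real.sin (((k + 1 : ℕ) : ℝ) * θ)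
        + b (k + 1) * Real.cos (((k + 1 : ℕ) : ℝ) * θ)) with hterm
  have htermb : ∀ k : ℕ, |term k| ≤ (4 * M₀ * r) * r ^ k := by
    intro k
    have h1 : |term k| = r ^ (k + 1) *
        |a (k + 1) * Real.sin (((k + 1 : ℕ) : ℝ) * θ)
          + b (k + 1) * Real.cos (((k + 1 : ℕ) : ℝ) * θ)| := by
      rw [hterm, abs_mul, abs_of_nonneg (pow_nonneg h0r _)]
    rw [h1, pow_succ]
    have h2 : |a (k + 1) * Real.sin (((k + 1 : ℕ) : ℝ) * θ)
        + b (k + 1) * Real.cos (((k + 1 : ℕ) : ℝ) * θ)| ≤ 4 * M₀ := by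
      calc _ ≤ |a (k + 1) * Real.sin (((k + 1 : ℕ) : ℝ) * θ)|
            + |b (k + 1) * Real.cos (((k + 1 : ℕ) : ℝ) * θ)| := abs_add_le _ _
        _ ≤ |a (k + 1)| * 1 + |b (k + 1)| * 1 := by
            rw [abs_mul, abs_mul]
            gcongr
            · exact Real.abs_sin_le_one _
            · exact Real.abs_cos_le_one _
        _ ≤ 2 * M₀ * 1 + 2 * M₀ * 1 := by gcongr <;> [exact hacoef _; exact hbcoef _]
        _ = 4 * M₀ := by ring
    calc r ^ k * r * _ ≤ r ^ k * r * (4 * M₀) := by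
          apply mul_le_mul_of_nonneg_left h2 (by positivity)
      _ = (4 * M₀ * r) * r ^ k := by ring
  have hsummable : Summable fun k : ℕ => |term k| :=
    Summable.of_nonneg_of_le (fun k => abs_nonneg _) htermb
      ((summable_geometric_of_lt_one h0r h1r).mul_left _)
  refine ⟨hsummable, ?_⟩
  -- the expanded integrand
  set c : ℕ → ℝ → ℝ := fun k τ =>
    if k = 0 then 1 else 2 * r ^ k * Real.cos ((k : ℝ) * (θ - τ)) with hc
  set F : ℕ → ℝ → ℝ := fun k τ => g τ * c k τ with hF
  have hcc : ∀ k, Continuous (c k) := by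
    intro k
    match k with
    | 0 => simpa [hc] using continuous_const
    | (k + 1) =>
      simp only [hc, if_neg (Nat.succ_ne_zero k)]
      exact continuous_const.mul (Real.continuous_cos.comp (by fun_prop))
  have hFc : ∀ k, Continuous (F k) := fun k => hg.mul (hcc k)
  -- dominated convergence
  have hDCT : HasSum (fun k => ∫ τ in (-π)..π, F k τ)
      (∫ τ in (-π)..π, g τ * ((1 - r ^ 2) / (1 - 2 * r * Real.cos (θ - τ) + r ^ 2))) := by
    apply intervalIntegral.hasSum_integral_of_dominated_convergence
      (bound := fun k _ => 2 * M₀ * r ^ k)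
    · exact fun k => (hFc k).aestronglyMeasurable
    · intro k
      filter_upwards with τ hτ
      rw [Set.uIoc_of_le (by linarith)] at hτ
      have hgb : |g τ| ≤ M₀ := hMb τ ⟨by linarith [hτ.1], by linarith [hτ.2]⟩
      have hcb : |c k τ| ≤ 2 * r ^ k := by
        match k with
        | 0 => simp [hc]
        | (k + 1) =>
          simp only [hc, if_neg (Nat.succ_ne_zero k)]
          rw [abs_mul, abs_of_nonneg (by positivity : (0:ℝ) ≤ 2 * r ^ (k+1))]
          calc 2 * r ^ (k+1) * |Real.cos _| ≤ 2 * r ^ (k+1) * 1 := by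
                exact mul_le_mul_of_nonneg_left (Real.abs_cos_le_one _) (by positivity)
            _ = 2 * r ^ (k+1) := mul_one _
      calc ‖F k τ‖ = |g τ| * |c k τ| := abs_mul _ _
        _ ≤ M₀ * (2 * r ^ k) := mul_le_mul hgb hcb (abs_nonneg _) hM₀
        _ = 2 * M₀ * r ^ k := by ring
    · filter_upwards with τ hτ
      exact ((summable_geometric_of_lt_one h0r h1r).mul_left _)
    · exact intervalIntegrable_const
    · filter_upwards with τ hτ
      exact (kernel_hasSum h0r h1r (θ - τ)).mul_left (g τ)
  -- moving integrals between [-π,π] and [0,2π]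
  have hshift : ∀ f : ℝ → ℝ, (∀ τ, f (τ + 2 * π) = f τ) →
      (∫ τ in (-π)..π, f τ) = ∫ τ in (0 : ℝ)..(2 * π), f τ := by
    intro f hf
    have := Function.Periodic.intervalIntegral_add_eq (f := f) (T := 2 * π) hf (-π) 0
    simpa [show -π + 2 * π = π by ring] using this
  -- value of the zeroth integral
  have hI0 : ∫ τ in (-π)..π, F 0 τ = π * a₀ := by
    have : ∀ τ, F 0 τ = g τ := by intro τ; simp [hF, hc]
    rw [show (fun τ => F 0 τ) = g from funext this, hshift g hper, ha₀]
    field_simp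
  -- values of the other integrals
  have hIk : ∀ k : ℕ, ∫ τ in (-π)..π, F (k + 1) τ = (2 * π) * term k := by
    intro k
    have hexp : ∀ τ, F (k + 1) τ =
        (2 * r ^ (k + 1) * Real.cos (((k + 1 : ℕ) : ℝ) * θ)) *
          (g τ * Real.cos (((k + 1 : ℕ) : ℝ) * τ)) +
        (2 * r ^ (k + 1) * Real.sin (((k + 1 : ℕ) : ℝ) * θ)) *
          (g τ * Real.sin (((k + 1 : ℕ) : ℝ) * τ)) := by
      intro τ
      simp only [hF, hc, if_neg (Nat.succ_ne_zero k)]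
      rw [show ((k + 1 : ℕ) : ℝ) * (θ - τ)
          = ((k + 1 : ℕ) : ℝ) * θ - ((k + 1 : ℕ) : ℝ) * τ by ring, Real.cos_sub]
      ring
    rw [intervalIntegral.integral_congr (g :=
      fun τ => (2 * r ^ (k + 1) * Real.cos (((k + 1 : ℕ) : ℝ) * θ)) *
          (g τ * Real.cos (((k + 1 : ℕ) : ℝ) * τ)) +
        (2 * r ^ (k + 1) * Real.sin (((k + 1 : ℕ) : ℝ) * θ)) *
          (g τ * Real.sin (((k + 1 : ℕ) : ℝ) * τ))) (fun τ _ => hexp τ)]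
    rw [intervalIntegral.integral_add
      ((Continuous.intervalIntegrable (u := fun τ => (2 * r ^ (k + 1) * Real.cos (((k + 1 : ℕ) : ℝ) * θ)) *
          (g τ * Real.cos (((k + 1 : ℕ) : ℝ) * τ))) (by fun_prop) _ _))
      ((Continuous.intervalIntegrable (u := fun τ => (2 * r ^ (k + 1) * Real.sin (((k + 1 : ℕ) : ℝ) * θ)) *
          (g τ * Real.sin (((k + 1 : ℕ) : ℝ) * τ))) (by fun_prop) _ _)),
      intervalIntegral.integral_const_mul, intervalIntegral.integral_const_mul]
    have hpc : ∀ τ, g (τ + 2 * π) * Real.cos (((k + 1 : ℕ) : ℝ) * (τ + 2 * π))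
        = g τ * Real.cos (((k + 1 : ℕ) : ℝ) * τ) := by
      intro τ
      rw [hper, show ((k + 1 : ℕ) : ℝ) * (τ + 2 * π)
        = ((k + 1 : ℕ) : ℝ) * τ + (k + 1 : ℕ) * (2 * π) by push_cast; ring,
        Real.cos_add_nat_mul_two_pi]
    have hps : ∀ τ, g (τ + 2 * π) * Real.sin (((k + 1 : ℕ) : ℝ) * (τ + 2 * π))
        = g τ * Real.sin (((k + 1 : ℕ) : ℝ) * τ) := by
      intro τ
      rw [hper, show ((k + 1 : ℕ) : ℝ) * (τ + 2 * π)
        = ((k + 1 : ℕ) : ℝ) * τ + (k + 1 : ℕ) * (2 * π) by push_cast; ring,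
        Real.sin_add_nat_mul_two_pi]
    rw [hshift _ hpc, hshift _ hps]
    have hca : ∫ τ in (0:ℝ)..(2*π), g τ * Real.cos (((k + 1 : ℕ) : ℝ) * τ) = π * b (k+1) := by
      rw [hb (k+1)]; field_simp
    have hsa : ∫ τ in (0:ℝ)..(2*π), g τ * Real.sin (((k + 1 : ℕ) : ℝ) * τ) = π * a (k+1) := by
      rw [ha (k+1)]; field_simp
    rw [hca, hsa, hterm]
    ring
  -- assemble
  have h1 := (hasSum_nat_add_iff' (f := fun k => ∫ τ in (-π)..π, F k τ) 1).mpr hDCT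
  rw [Finset.sum_range_one, hI0] at h1
  simp only [hIk] at h1
  have h3 := h1.div_const (2 * π)
  simp only [mul_div_cancel_left₀ _ (by positivity : (2 * π : ℝ) ≠ 0)] at h3
  simp only [mul_div_assoc]
  rw [h3.tsum_eq]
  field_simp
  ring_nf
  refine intervalIntegral.integral_congr (fun τ _ => ?_)
  ring
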